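/- Fix real t > 0 and x, y ∈ ℝ. Then lim_{M → ∞} Σ_{n=1}^∞ (2/M) · cos( (n − 1/2)·π·x / M ) · cos( (n − 1/2)·π·y / M ) · e^{ −(n − 1/2)² π² t / (2M²) } = (1/√(2πt)) · ( e^{ −(x−y)²/(2t) } + e^{ −(x+y)²/(2t) } ), where for each M > 0 the series converges absolutely. -/

import Mathlib

open MeasureTheory Real Complex Filter Set

lemma gauss_cos_int (a c : ℝ) (ha : 0 < a) :
    ∫ u : ℝ, Real.cos (c*u) * Real.exp (-a*u^2) =
      Real.sqrt (Real.pi/a) * Real.exp (-c^2/(4*a)) := by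
  have hb : 0 < ((a : ℂ)).re := by simpa using ha
  have h := fourierIntegral_gaussian hb (c : ℂ)
  have key : ∀ x : ℝ, Complex.exp (Complex.I * c * x) * Complex.exp (-(a:ℂ) * x ^ 2)
      = Complex.exp (((c*x : ℝ):ℂ) * Complex.I) * ((Real.exp (-a*x^2) : ℝ) : ℂ) := by
    intro x
    have h1 : (-(a:ℂ) * x^2 : ℂ) = ((-a*x^2 : ℝ) : ℂ) := by push_cast; ring
    have h2 : Complex.I * (c:ℂ) * x = ((c*x : ℝ):ℂ) * Complex.I := by push_cast; ring
    rw [h1, h2, ← Complex.ofReal_exp]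
  have hint : Integrable (fun x : ℝ => Complex.exp (Complex.I * c * x) * Complex.exp (-(a:ℂ) * x ^ 2)) := by
    apply Integrable.mono' (integrable_exp_neg_mul_sq ha)
    · apply Continuous.aestronglyMeasurable; fun_prop
    · filter_upwards with x
      rw [key x, norm_mul]
      simp only [Complex.norm_exp, Complex.norm_real, Real.norm_eq_abs]
      rw [_root_.abs_of_nonneg (Real.exp_nonneg _)]
      simp
  have hre := integral_re hint
  rw [h] at hre
  have lhs_eq : ∀ x : ℝ, RCLike.re (Complex.exp (Complex.I * c * x) * Complex.exp (-(a:ℂ) * x ^ 2))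
      = Real.cos (c*x) * Real.exp (-a*x^2) := by
    intro x
    rw [key x, Complex.exp_mul_I, ← Complex.ofReal_cos, ← Complex.ofReal_sin]
    have : ((Real.cos (c*x) : ℂ) + (Real.sin (c*x) : ℂ) * Complex.I) * ((Real.exp (-a*x^2) : ℝ) : ℂ)
        = ((Real.cos (c*x) * Real.exp (-a*x^2) : ℝ) : ℂ) + ((Real.sin (c*x) * Real.exp (-a*x^2) : ℝ) : ℂ) * Complex.I := by
      push_cast; ring
    rw [this]
    simp only [RCLike.re_to_complex, Complex.add_re, Complex.mul_I_re, Complex.ofReal_im,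
      Complex.ofReal_re, neg_zero, add_zero]
  rw [show (fun x : ℝ => RCLike.re (Complex.exp (Complex.I * c * x) * Complex.exp (-(a:ℂ) * x ^ 2)))
      = fun x : ℝ => Real.cos (c*x) * Real.exp (-a*x^2) from funext lhs_eq] at hre
  have hpa : (0:ℝ) ≤ Real.pi / a := by positivity
  have h3 : ((Real.pi : ℂ) / a) ^ (1/2 : ℂ) = ((Real.sqrt (Real.pi/a) : ℝ) : ℂ) := by
    rw [Real.sqrt_eq_rpow, Complex.ofReal_cpow hpa]
    push_cast; ring_nf
  have h4 : (-(c:ℂ) ^ 2 / (4 * (a:ℂ))) = ((-c^2/(4*a) : ℝ) : ℂ) := by push_cast; ring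
  rw [h3, h4, ← Complex.ofReal_exp, ← Complex.ofReal_mul] at hre
  rw [hre]
  exact Complex.ofReal_re _

lemma gauss_cos_integrable (a c : ℝ) (ha : 0 < a) :
    Integrable (fun u : ℝ => Real.cos (c*u) * Real.exp (-a*u^2)) := by
  apply Integrable.mono' (integrable_exp_neg_mul_sq ha)
  · apply Continuous.aestronglyMeasurable; fun_prop
  · filter_upwards with u
    rw [norm_mul, Real.norm_eq_abs, Real.norm_eq_abs, _root_.abs_of_nonneg (Real.exp_nonneg _)]
    calc |Real.cos (c*u)| * Real.exp (-a*u^2) ≤ 1 * Real.exp (-a*u^2) :=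
          mul_le_mul_of_nonneg_right (Real.abs_cos_le_one _) (Real.exp_nonneg _)
      _ = Real.exp (-a*u^2) := one_mul _

lemma gauss_cos_Ioi (a c : ℝ) (ha : 0 < a) :
    ∫ u in Set.Ioi (0:ℝ), Real.cos (c*u) * Real.exp (-a*u^2) =
      Real.sqrt (Real.pi/a) / 2 * Real.exp (-c^2/(4*a)) := by
  have hint := gauss_cos_integrable a c ha
  have heven : ∫ u in Set.Iic (0:ℝ), Real.cos (c*u) * Real.exp (-a*u^2)
      = ∫ u in Set.Ioi (0:ℝ), Real.cos (c*u) * Real.exp (-a*u^2) := by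
    have h0 := integral_comp_neg_Ioi (c := (0:ℝ))
      (f := fun u : ℝ => Real.cos (c*u) * Real.exp (-a*u^2))
    simp only [neg_zero] at h0
    rw [← h0]
    congr 1
    ext u
    rw [mul_neg, Real.cos_neg]
    ring_nf
  have htot := intervalIntegral.integral_Iic_add_Ioi (b := (0:ℝ))
    (hint.integrableOn) (hint.integrableOn) (μ := volume)
  rw [heven, gauss_cos_int a c ha] at htot
  linarith

-- the target integral
lemma f_integral (t x y : ℝ) (ht : 0 < t) :
    ∫ u in Set.Ioi (0:ℝ),
        2 * Real.cos (Real.pi*u*x) * Real.cos (Real.pi*u*y) * Real.exp (-(Real.pi^2*t/2)*u^2)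
      = (1 / Real.sqrt (2 * Real.pi * t)) *
        (Real.exp (-(x - y) ^ 2 / (2 * t)) + Real.exp (-(x + y) ^ 2 / (2 * t))) := by
  set a : ℝ := Real.pi^2*t/2 with ha_def
  have ha : 0 < a := by positivity
  have hsplit : ∀ u : ℝ,
      2 * Real.cos (Real.pi*u*x) * Real.cos (Real.pi*u*y) * Real.exp (-a*u^2)
        = Real.cos (Real.pi*(x-y)*u) * Real.exp (-a*u^2)
          + Real.cos (Real.pi*(x+y)*u) * Real.exp (-a*u^2) := by
    intro u
    have e1 : Real.pi*(x-y)*u = Real.pi*u*x - Real.pi*u*y := by ring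
    have e2 : Real.pi*(x+y)*u = Real.pi*u*x + Real.pi*u*y := by ring
    rw [e1, e2, Real.cos_sub, Real.cos_add]; ring
  simp only [hsplit]
  rw [integral_add ((gauss_cos_integrable a _ ha).integrableOn)
      ((gauss_cos_integrable a _ ha).integrableOn),
    gauss_cos_Ioi a _ ha, gauss_cos_Ioi a _ ha]
  have hπ := Real.pi_pos
  have hc : Real.sqrt (Real.pi/a) / 2 = 1 / Real.sqrt (2*Real.pi*t) := by
    have h1 : Real.pi / a = 2 / (Real.pi * t) := by
      rw [ha_def]; field_simp
    have h2 : Real.sqrt (2/(Real.pi*t)) * Real.sqrt (2*Real.pi*t) = 2 := by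
      rw [← Real.sqrt_mul (by positivity)]
      have : 2/(Real.pi*t) * (2*Real.pi*t) = 4 := by field_simp; ring
      rw [this, show (4:ℝ) = 2^2 by norm_num, Real.sqrt_sq (by norm_num)]
    have h3 : Real.sqrt (2*Real.pi*t) ≠ 0 := by positivity
    rw [h1, div_eq_div_iff (by norm_num : (2:ℝ) ≠ 0) h3, one_mul]
    exact h2
  have he1 : -(Real.pi*(x-y))^2/(4*a) = -(x-y)^2/(2*t) := by
    rw [ha_def]; field_simp; ring
  have he2 : -(Real.pi*(x+y))^2/(4*a) = -(x+y)^2/(2*t) := by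
    rw [ha_def]; field_simp; ring
  rw [he1, he2, hc]; ring

set_option maxHeartbeats 1000000 in
theorem stmt_12 (t : ℝ) (ht : 0 < t) (x y : ℝ) :
    (∀ M : ℝ, 0 < M → Summable fun n : ℕ =>
      |(2 / M) * Real.cos (((n : ℝ) + 1 - 1 / 2) * Real.pi * x / M) *
        Real.cos (((n : ℝ) + 1 - 1 / 2) * Real.pi * y / M) *
        Real.exp (-((n : ℝ) + 1 - 1 / 2) ^ 2 * Real.pi ^ 2 * t / (2 * M ^ 2))|) ∧
    Filter.Tendsto
      (fun M : ℝ =>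
        ∑' n : ℕ, (2 / M) * Real.cos (((n : ℝ) + 1 - 1 / 2) * Real.pi * x / M) *
          Real.cos (((n : ℝ) + 1 - 1 / 2) * Real.pi * y / M) *
          Real.exp (-((n : ℝ) + 1 - 1 / 2) ^ 2 * Real.pi ^ 2 * t / (2 * M ^ 2)))
      Filter.atTop
      (nhds ((1 / Real.sqrt (2 * Real.pi * t)) *
        (Real.exp (-(x - y) ^ 2 / (2 * t)) + Real.exp (-(x + y) ^ 2 / (2 * t))))) := by
  have hπ := Real.pi_pos
  set a : ℝ := Real.pi^2*t/2 with ha_def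
  have ha : 0 < a := by positivity
  -- the limiting function
  set f : ℝ → ℝ := fun u =>
    2 * Real.cos (Real.pi*u*x) * Real.cos (Real.pi*u*y) * Real.exp (-a*u^2) with hf_def
  have hf_cont : Continuous f := by fun_prop
  -- rewriting the terms of the series
  have hterm : ∀ M : ℝ, 0 < M → ∀ n : ℕ,
      (2 / M) * Real.cos (((n : ℝ) + 1 - 1 / 2) * Real.pi * x / M) *
        Real.cos (((n : ℝ) + 1 - 1 / 2) * Real.pi * y / M) *
        Real.exp (-((n : ℝ) + 1 - 1 / 2) ^ 2 * Real.pi ^ 2 * t / (2 * M ^ 2))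
      = f (((n : ℝ) + 1/2)/M) / M := by
    intro M hM n
    have hM0 : M ≠ 0 := ne_of_gt hM
    simp only [hf_def]
    have e1 : Real.pi * (((n : ℝ) + 1/2)/M) * x = ((n : ℝ) + 1 - 1 / 2) * Real.pi * x / M := by
      field_simp
      ring
    have e2 : Real.pi * (((n : ℝ) + 1/2)/M) * y = ((n : ℝ) + 1 - 1 / 2) * Real.pi * y / M := by
      field_simp
      ring
    have e3 : -a * (((n : ℝ) + 1/2)/M)^2 = -((n : ℝ) + 1 - 1 / 2) ^ 2 * Real.pi ^ 2 * t / (2 * M ^ 2) := by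
      rw [ha_def]; field_simp; ring
    rw [e1, e2, e3]; ring
  -- Summability
  have hsum : ∀ M : ℝ, 0 < M → Summable fun n : ℕ =>
      |(2 / M) * Real.cos (((n : ℝ) + 1 - 1 / 2) * Real.pi * x / M) *
        Real.cos (((n : ℝ) + 1 - 1 / 2) * Real.pi * y / M) *
        Real.exp (-((n : ℝ) + 1 - 1 / 2) ^ 2 * Real.pi ^ 2 * t / (2 * M ^ 2))| := by
    intro M hM
    set r : ℝ := Real.exp (-(Real.pi^2*t/(2*M^2))) with hr_def
    have hr0 : 0 < r := Real.exp_pos _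
    have hr1 : r < 1 := by
      rw [hr_def, Real.exp_lt_one_iff]
      have : 0 < Real.pi^2*t/(2*M^2) := by positivity
      linarith
    refine Summable.of_nonneg_of_le (fun n => abs_nonneg _) ?_
      ((summable_geometric_of_lt_one hr0.le hr1).mul_left (2/M))
    · intro n
      have hb1 := Real.abs_cos_le_one (((n : ℝ) + 1 - 1 / 2) * Real.pi * x / M)
      have hb2 := Real.abs_cos_le_one (((n : ℝ) + 1 - 1 / 2) * Real.pi * y / M)
      have h2M : 0 < 2/M := by positivity
      rw [abs_mul, abs_mul, abs_mul, abs_of_pos h2M, _root_.abs_of_nonneg (Real.exp_nonneg _)]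
      have hexp : Real.exp (-((n : ℝ) + 1 - 1 / 2) ^ 2 * Real.pi ^ 2 * t / (2 * M ^ 2)) ≤ r^n := by
        rw [hr_def, ← Real.exp_nat_mul, Real.exp_le_exp]
        have h1 : (n:ℝ) ≤ ((n : ℝ) + 1 - 1 / 2) ^ 2 := by nlinarith [Nat.cast_nonneg (α := ℝ) n]
        have h2 : 0 < Real.pi^2*t := by positivity
        calc -((n : ℝ) + 1 - 1 / 2) ^ 2 * Real.pi ^ 2 * t / (2 * M ^ 2)
            = (-(((n : ℝ)+1-1/2)^2 * (Real.pi^2*t)))/(2*M^2) := by ring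
          _ ≤ (-((n:ℝ) * (Real.pi^2*t)))/(2*M^2) := by
              gcongr
          _ = (n:ℝ) * -(Real.pi^2*t/(2*M^2)) := by ring
      calc 2/M * |Real.cos (((n : ℝ) + 1 - 1 / 2) * Real.pi * x / M)| *
            |Real.cos (((n : ℝ) + 1 - 1 / 2) * Real.pi * y / M)| *
            Real.exp (-((n : ℝ) + 1 - 1 / 2) ^ 2 * Real.pi ^ 2 * t / (2 * M ^ 2))
          ≤ 2/M * 1 * 1 * r^n := by gcongr
        _ = 2/M * r^n := by ring
  refine ⟨hsum, ?_⟩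
  -- step functions
  set F : ℝ → ℝ → ℝ := fun M u => f ((((⌊M*u⌋ : ℤ) : ℝ) + 1/2)/M) with hF_def
  have hFmeas : ∀ M : ℝ, Measurable (F M) := by
    intro M
    apply hf_cont.measurable.comp
    exact ((measurable_from_top.comp ((measurable_const_mul M).floor)).add_const _).div_const _
  -- dominating function
  set B : ℝ → ℝ := fun u => 2 * Real.exp (a*u - a*u^2) with hB_def
  have hB_int : Integrable B := by
    have hac : 0 < ((a:ℂ)).re := by simpa using ha
    have h := (integrable_cexp_quadratic hac (a:ℂ) 0).norm
    have heq : ∀ x : ℝ, ‖Complex.exp (-(a:ℂ)*x^2 + (a:ℂ)*x + 0)‖ = Real.exp (a*x - a*x^2) := by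
      intro x
      have : (-(a:ℂ)*x^2 + (a:ℂ)*x + 0) = ((a*x - a*x^2 : ℝ) : ℂ) := by push_cast; ring
      rw [this, ← Complex.ofReal_exp, Complex.norm_real, Real.norm_eq_abs,
        _root_.abs_of_nonneg (Real.exp_nonneg _)]
    have h2 : Integrable (fun x : ℝ => Real.exp (a*x - a*x^2)) :=
      h.congr (Filter.Eventually.of_forall heq)
    exact h2.const_mul 2
  -- pointwise bound
  have hFle : ∀ M : ℝ, 1 ≤ M → ∀ u : ℝ, 0 ≤ u → |F M u| ≤ B u := by
    intro M hM1 u hu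
    have hM : 0 < M := lt_of_lt_of_le one_pos hM1
    set v : ℝ := (((⌊M*u⌋ : ℤ) : ℝ) + 1/2)/M with hv
    have hfl0 : (0:ℤ) ≤ ⌊M*u⌋ := Int.floor_nonneg.2 (mul_nonneg hM.le hu)
    have hfl0' : (0:ℝ) ≤ ((⌊M*u⌋ : ℤ) : ℝ) := by exact_mod_cast hfl0
    have hv0 : 0 < v := by rw [hv]; positivity
    have hlow : M*u - 1 < ((⌊M*u⌋ : ℤ) : ℝ) := Int.sub_one_lt_floor _
    have hvlow : u - 1/2 ≤ v := by
      rw [hv, le_div_iff₀ hM]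
      nlinarith
    have hsq : u^2 - u ≤ v^2 := by nlinarith [sq_nonneg v, sq_nonneg (v - u + 1/2)]
    have h1 : |F M u| ≤ 2 * Real.exp (-a*v^2) := by
      have : F M u = f v := rfl
      rw [this, hf_def]
      have hb1 := Real.abs_cos_le_one (Real.pi*v*x)
      have hb2 := Real.abs_cos_le_one (Real.pi*v*y)
      rw [abs_mul, abs_mul, abs_mul, _root_.abs_of_nonneg (Real.exp_nonneg _),
        _root_.abs_two]
      calc 2 * |Real.cos (Real.pi*v*x)| * |Real.cos (Real.pi*v*y)| * Real.exp (-a*v^2)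
          ≤ 2 * 1 * 1 * Real.exp (-a*v^2) := by gcongr
        _ = 2 * Real.exp (-a*v^2) := by ring
    have h2 : Real.exp (-a*v^2) ≤ Real.exp (a*u - a*u^2) := by
      rw [Real.exp_le_exp]
      nlinarith
    calc |F M u| ≤ 2 * Real.exp (-a*v^2) := h1
      _ ≤ 2 * Real.exp (a*u - a*u^2) := by linarith
      _ = B u := rfl
  -- tsum equals integral of step function
  have hrep : ∀ M : ℝ, 1 ≤ M →
      (∑' n : ℕ, f (((n : ℝ) + 1/2)/M) / M) = ∫ u in Set.Ioi (0:ℝ), F M u := by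
    intro M hM1
    have hM : 0 < M := lt_of_lt_of_le one_pos hM1
    have hM0 : M ≠ 0 := ne_of_gt hM
    have hUnion : Set.Ici (0:ℝ) = ⋃ n : ℕ, Set.Ico ((n:ℝ)/M) (((n:ℝ)+1)/M) := by
      ext u
      simp only [Set.mem_Ici, Set.mem_iUnion, Set.mem_Ico]
      constructor
      · intro hu
        have hfl0 : (0:ℤ) ≤ ⌊M*u⌋ := Int.floor_nonneg.2 (mul_nonneg hM.le hu)
        refine ⟨(⌊M*u⌋).toNat, ?_, ?_⟩
        · rw [div_le_iff₀ hM]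
          have h1 : (((⌊M*u⌋).toNat : ℕ) : ℝ) = ((⌊M*u⌋ : ℤ) : ℝ) := by
            exact_mod_cast Int.toNat_of_nonneg hfl0
          rw [h1]
          calc ((⌊M*u⌋ : ℤ) : ℝ) ≤ M*u := Int.floor_le _
            _ = u*M := mul_comm _ _
        · rw [lt_div_iff₀ hM]
          have h1 : (((⌊M*u⌋).toNat : ℕ) : ℝ) = ((⌊M*u⌋ : ℤ) : ℝ) := by
            exact_mod_cast Int.toNat_of_nonneg hfl0
          rw [h1]
          calc u*M = M*u := mul_comm _ _
            _ < ((⌊M*u⌋ : ℤ) : ℝ) + 1 := Int.lt_floor_add_one _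
      · rintro ⟨n, h1, h2⟩
        exact le_trans (by positivity) h1
    have hmeas : ∀ n : ℕ, MeasurableSet (Set.Ico ((n:ℝ)/M) (((n:ℝ)+1)/M)) :=
      fun n => measurableSet_Ico
    have hdisj : Pairwise (Function.onFun Disjoint
        fun n : ℕ => Set.Ico ((n:ℝ)/M) (((n:ℝ)+1)/M)) := by
      have key : ∀ m n : ℕ, m < n →
          Disjoint (Set.Ico ((m:ℝ)/M) (((m:ℝ)+1)/M)) (Set.Ico ((n:ℝ)/M) (((n:ℝ)+1)/M)) := by
        intro m n hmn
        rw [Set.Ico_disjoint_Ico]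
        have hle : ((m:ℝ)+1)/M ≤ (n:ℝ)/M := by
          gcongr
          exact_mod_cast hmn
        calc min (((m:ℝ)+1)/M) (((n:ℝ)+1)/M) ≤ ((m:ℝ)+1)/M := min_le_left _ _
          _ ≤ (n:ℝ)/M := hle
          _ ≤ max ((m:ℝ)/M) ((n:ℝ)/M) := le_max_right _ _
      intro m n hmn
      rcases lt_or_gt_of_ne hmn with h | h
      · exact key m n h
      · exact (key n m h).symm
    have hint : IntegrableOn (F M) (Set.Ici (0:ℝ)) := by
      refine Integrable.mono' hB_int.restrict ((hFmeas M).aestronglyMeasurable) ?_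
      rw [ae_restrict_iff' measurableSet_Ici]
      exact ae_of_all _ fun u hu => by
        simpa [Real.norm_eq_abs] using hFle M hM1 u hu
    have hpiece : ∀ n : ℕ,
        (∫ u in Set.Ico ((n:ℝ)/M) (((n:ℝ)+1)/M), F M u) = f (((n:ℝ)+1/2)/M) / M := by
      intro n
      have hconst : Set.EqOn (F M) (fun _ => f (((n:ℝ)+1/2)/M))
          (Set.Ico ((n:ℝ)/M) (((n:ℝ)+1)/M)) := by
        intro u hu
        have h1 : (n:ℝ) ≤ M*u := by
          have := hu.1
          rw [div_le_iff₀ hM] at this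
          linarith [mul_comm u M ▸ this]
        have h2 : M*u < (n:ℝ)+1 := by
          have := hu.2
          rw [lt_div_iff₀ hM] at this
          linarith [mul_comm u M ▸ this]
        have hfl : ⌊M*u⌋ = (n:ℤ) := by
          rw [Int.floor_eq_iff]
          constructor
          · exact_mod_cast h1
          · exact_mod_cast h2
        show f ((((⌊M*u⌋ : ℤ) : ℝ) + 1/2)/M) = f (((n:ℝ)+1/2)/M)
        rw [hfl]
        norm_num
      rw [setIntegral_congr_fun measurableSet_Ico hconst, setIntegral_const, measureReal_def, Real.volume_Ico]
      have hlen : ((n:ℝ)+1)/M - (n:ℝ)/M = 1/M := by field_simp; ring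
      rw [hlen, ENNReal.toReal_ofReal (by positivity), smul_eq_mul]
      ring
    calc (∑' n : ℕ, f (((n : ℝ) + 1/2)/M) / M)
        = ∑' n : ℕ, ∫ u in Set.Ico ((n:ℝ)/M) (((n:ℝ)+1)/M), F M u :=
          tsum_congr fun n => (hpiece n).symm
      _ = ∫ u in ⋃ n : ℕ, Set.Ico ((n:ℝ)/M) (((n:ℝ)+1)/M), F M u :=
          (integral_iUnion hmeas hdisj (hUnion ▸ hint)).symm
      _ = ∫ u in Set.Ici (0:ℝ), F M u := by rw [← hUnion]
      _ = ∫ u in Set.Ioi (0:ℝ), F M u := integral_Ici_eq_integral_Ioi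
  -- dominated convergence
  have hlim : Filter.Tendsto (fun M => ∫ u in Set.Ioi (0:ℝ), F M u) Filter.atTop
      (nhds (∫ u in Set.Ioi (0:ℝ), f u)) := by
    apply tendsto_integral_filter_of_dominated_convergence B
    · exact Filter.Eventually.of_forall fun M => (hFmeas M).aestronglyMeasurable
    · filter_upwards [Filter.eventually_ge_atTop (1:ℝ)] with M hM1
      rw [ae_restrict_iff' measurableSet_Ioi]
      exact ae_of_all _ fun u hu => by
        simpa [Real.norm_eq_abs] using hFle M hM1 u (le_of_lt hu)
    · exact hB_int.restrict
    · refine (ae_restrict_iff' measurableSet_Ioi).2 (ae_of_all _ fun u hu => ?_)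
      have harg : Filter.Tendsto (fun M : ℝ => (((⌊M*u⌋ : ℤ) : ℝ) + 1/2)/M)
          Filter.atTop (nhds u) := by
        have hg : Filter.Tendsto (fun M : ℝ => u - 1/M) Filter.atTop (nhds u) := by
          simpa [one_div] using tendsto_const_nhds.sub (tendsto_inv_atTop_zero (𝕜 := ℝ))
        have hh : Filter.Tendsto (fun M : ℝ => u + 1/M) Filter.atTop (nhds u) := by
          simpa [one_div] using tendsto_const_nhds.add (tendsto_inv_atTop_zero (𝕜 := ℝ))
        apply tendsto_of_tendsto_of_tendsto_of_le_of_le' hg hh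
        · filter_upwards [Filter.eventually_gt_atTop (0:ℝ)] with M hM
          rw [le_div_iff₀ hM, sub_mul, one_div_mul_cancel hM.ne']
          have := Int.sub_one_lt_floor (M*u)
          have hc : u*M = M*u := mul_comm u M
          linarith
        · filter_upwards [Filter.eventually_gt_atTop (0:ℝ)] with M hM
          rw [div_le_iff₀ hM, add_mul, one_div_mul_cancel hM.ne']
          have := Int.floor_le (M*u)
          have hc : u*M = M*u := mul_comm u M
          linarith
      exact (hf_cont.tendsto u).comp harg
  -- conclusion
  have hIoi : (∫ u in Set.Ioi (0:ℝ), f u)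
      = (1 / Real.sqrt (2 * Real.pi * t)) *
        (Real.exp (-(x - y) ^ 2 / (2 * t)) + Real.exp (-(x + y) ^ 2 / (2 * t))) := by
    rw [hf_def, ha_def]
    exact f_integral t x y ht
  rw [hIoi] at hlim
  apply hlim.congr'
  filter_upwards [Filter.eventually_ge_atTop (1:ℝ)] with M hM1
  have hM : 0 < M := lt_of_lt_of_le one_pos hM1
  rw [← hrep M hM1]
  exact (tsum_congr fun n => (hterm M hM n)).symm
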